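/- Let I ⊆ ℝ be an open interval, let h : I → ℝ be smooth with h′ nowhere zero, and let A : ℝ → ℝ be smooth. Then for every smooth solution u : ℝ × I → ℝ of the equation h′(x)u_t = (A(u)u_x)_x + h(x)u_x (the case B = 1, f = h_x), the pair F = e^t h′(x)u, G = −e^t(A(u)u_x + h(x)u) satisfies the conservation-law identity ∂_t F + ∂_x G = 0 at every point of ℝ × I. -/

import Mathlib

open Set Real
open scoped ContDiff

/-- For the equation `h'(x) u_t = (A(u) u_x)_x + h(x) u_x` (the case
`B = 1`, `f = h_x`), the pair `F = e^t h'(x) u`, `G = -e^t (A(u) u_x + h(x) u)` is a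
conserved vector. -/
theorem conservation_law_case_B_one_f_hx
    (I : Set ℝ) (hIopen : IsOpen I) (hIconn : Convex ℝ I)
    (h : ℝ → ℝ) (hh : ContDiffOn ℝ ∞ h I) (hh0 : ∀ x ∈ I, deriv h x ≠ 0)
    (A : ℝ → ℝ) (hA : ContDiff ℝ ∞ A)
    (u : ℝ → ℝ → ℝ)
    (hu : ContDiffOn ℝ ∞ (fun p : ℝ × ℝ => u p.1 p.2) (univ ×ˢ I))
    (hpde : ∀ t : ℝ, ∀ x ∈ I,
      deriv h x * deriv (fun s => u s x) t
        = deriv (fun y => A (u t y) * deriv (fun z => u t z) y) x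
          + h x * deriv (fun y => u t y) x) :
    ∀ t : ℝ, ∀ x ∈ I,
      deriv (fun s => Real.exp s * deriv h x * u s x) t
        + deriv (fun y =>
            -(Real.exp t * (A (u t y) * deriv (fun z => u t z) y + h y * u t y))) x
        = 0 := by
  intro t x hx
  set Φ : ℝ × ℝ → ℝ := fun p => u p.1 p.2 with hΦdef
  have hS : IsOpen ((univ : Set ℝ) ×ˢ I) := isOpen_univ.prod hIopen
  have hmem : (t, x) ∈ (univ : Set ℝ) ×ˢ I := ⟨trivial, hx⟩
  have hdiffat : ∀ p ∈ (univ : Set ℝ) ×ˢ I, DifferentiableAt ℝ Φ p := by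
    intro p hp
    have := (hu.differentiableOn (by norm_num)).differentiableAt (hS.mem_nhds hp)
    exact this
  -- partial derivative in t
  have hut : HasDerivAt (fun s => u s x) (fderiv ℝ Φ (t, x) (1, 0)) t := by
    have := (hdiffat _ hmem).hasFDerivAt.comp_hasDerivAt t
      (HasDerivAt.prodMk (hasDerivAt_id t) (hasDerivAt_const t x))
    exact this
  -- partial derivative in x, at any point of I
  have key : ∀ y ∈ I, deriv (fun z => u t z) y = fderiv ℝ Φ (t, y) (0, 1) := by
    intro y hy
    have hd := hdiffat (t, y) ⟨trivial, hy⟩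
    have : HasDerivAt (fun z => u t z) (fderiv ℝ Φ (t, y) (0, 1)) y := by
      have := hd.hasFDerivAt.comp_hasDerivAt y
        (HasDerivAt.prodMk (hasDerivAt_const y t) (hasDerivAt_id y))
      exact this
    exact this.deriv
  -- the fderiv is smooth on the open set
  have hfd : ContDiffOn ℝ ∞ (fderiv ℝ Φ) ((univ : Set ℝ) ×ˢ I) :=
    hu.fderiv_of_isOpen hS (by norm_num)
  have h1 : DifferentiableAt ℝ (fderiv ℝ Φ) (t, x) :=
    (hfd.differentiableOn (by norm_num)).differentiableAt (hS.mem_nhds hmem)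
  have h2 : DifferentiableAt ℝ (fun y => fderiv ℝ Φ (t, y) ((0 : ℝ), (1 : ℝ))) x := by
    have hcomp : DifferentiableAt ℝ (fun y : ℝ => fderiv ℝ Φ (t, y)) x :=
      h1.comp x (DifferentiableAt.prodMk (differentiableAt_const t) differentiableAt_id)
    exact hcomp.clm_apply (differentiableAt_const _)
  have heq : (fun y => deriv (fun z => u t z) y)
      =ᶠ[nhds x] (fun y => fderiv ℝ Φ (t, y) ((0 : ℝ), (1 : ℝ))) := by
    filter_upwards [hIopen.mem_nhds hx] with y hy using key y hy
  have hv : DifferentiableAt ℝ (fun y => deriv (fun z => u t z) y) x :=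
    h2.congr_of_eventuallyEq heq
  have huy : DifferentiableAt ℝ (fun y => u t y) x := by
    have := (hdiffat _ hmem).comp x
      (DifferentiableAt.prodMk (differentiableAt_const t) differentiableAt_id)
    exact this
  have hhd : DifferentiableAt ℝ h x :=
    (hh.differentiableOn (by norm_num)).differentiableAt (hIopen.mem_nhds hx)
  have hAd : DifferentiableAt ℝ A (u t x) := (hA.differentiable (by norm_num)) _
  have hw : DifferentiableAt ℝ
      (fun y => A (u t y) * deriv (fun z => u t z) y) x :=
    (hAd.comp x huy).mul hv
  set ut := fderiv ℝ Φ (t, x) (1, 0) with hutdef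
  set ux := deriv (fun y => u t y) x with huxdef
  set E := deriv (fun y => A (u t y) * deriv (fun z => u t z) y) x with hEdef
  -- compute the t-derivative
  have hF : deriv (fun s => Real.exp s * deriv h x * u s x) t
      = Real.exp t * deriv h x * u t x + Real.exp t * deriv h x * ut := by
    have : HasDerivAt (fun s => Real.exp s * deriv h x * u s x)
        (Real.exp t * deriv h x * u t x + Real.exp t * deriv h x * ut) t := by
      have := ((Real.hasDerivAt_exp t).mul_const (deriv h x)).mul hut
      exact this
    exact this.deriv
  -- compute the x-derivative
  have hG : deriv (fun y =>
      -(Real.exp t * (A (u t y) * deriv (fun z => u t z) y + h y * u t y))) x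
      = -(Real.exp t * (E + (deriv h x * u t x + h x * ux))) := by
    have hux' : HasDerivAt (fun y => u t y) ux x := huy.hasDerivAt
    have : HasDerivAt (fun y =>
        -(Real.exp t * (A (u t y) * deriv (fun z => u t z) y + h y * u t y)))
        (-(Real.exp t * (E + (deriv h x * u t x + h x * ux)))) x := by
      exact ((hw.hasDerivAt.add ((hhd.hasDerivAt).mul hux')).const_mul
        (Real.exp t)).neg
    exact this.deriv
  have hp : deriv h x * ut = E + h x * ux := by
    have := hpde t x hx
    rwa [hut.deriv] at this
  rw [hF, hG]
  linear_combination Real.exp t * hp
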